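/- Let K₀ be the integral operator with kernel K(ξ,η) = ½ e^{−|ξ−η|/2} w′(ξ)w′(η), with w′ ∈ L²(ℝ), and set P = ∫_ℝ (w′(ξ))² dξ. Then every eigenvalue λ of K₀ satisfies 0 ≤ λ ≤ P/2, i.e., the spectrum of K₀ is contained in [0, P/2]. -/

import Mathlib

open MeasureTheory Set

noncomputable section

def chKer (w' : ℝ → ℝ) (ξ η : ℝ) : ℝ :=
  (1 / 2) * Real.exp (-|ξ - η| / 2) * (w' ξ * w' η)

def gfun (t x : ℝ) : ℝ := if t ≤ x then Real.exp ((t - x) / 2) else 0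

lemma gfun_nonneg (t x : ℝ) : 0 ≤ gfun t x := by
  unfold gfun; split <;> positivity

lemma gfun_measurable : Measurable (fun p : ℝ × ℝ => gfun p.1 p.2) := by
  unfold gfun
  exact Measurable.ite (measurableSet_le measurable_fst measurable_snd)
    ((measurable_fst.sub measurable_snd).div_const 2).exp measurable_const

lemma gfun_eq_indicator (x y : ℝ) :
    (fun t => gfun t x * gfun t y)
      = Set.indicator (Iic (min x y)) (fun t => Real.exp (t - (x + y) / 2)) := by
  funext t
  unfold gfun
  by_cases hx : t ≤ x <;> by_cases hy : t ≤ y <;>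
    simp [hx, hy, Set.indicator_apply, le_min_iff, ← Real.exp_add] <;> ring_nf

lemma gfun_integrable (x y : ℝ) : Integrable (fun t => gfun t x * gfun t y) := by
  rw [gfun_eq_indicator]
  refine (IntegrableOn.integrable_indicator ?_ measurableSet_Iic)
  have : EqOn (fun t => Real.exp (t - (x + y) / 2))
      (fun t => Real.exp t * Real.exp (-((x + y) / 2))) (Iic (min x y)) := by
    intro t _; simp only [← Real.exp_add]; ring_nf
  exact (integrable_congr (ae_restrict_of_forall_mem measurableSet_Iic this)).mpr
    ((integrableOn_exp_Iic _).mul_const _)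

lemma gfun_integral (x y : ℝ) :
    ∫ t, gfun t x * gfun t y = Real.exp (-|x - y| / 2) := by
  rw [gfun_eq_indicator, integral_indicator measurableSet_Iic]
  have h1 : ∀ t : ℝ, Real.exp (t - (x + y) / 2) = Real.exp t * Real.exp (-((x + y) / 2)) := by
    intro t; rw [← Real.exp_add]; ring_nf
  simp_rw [h1]
  rw [integral_mul_const, integral_exp_Iic, ← Real.exp_add]
  congr 1
  rcases le_total x y with h | h
  · rw [min_eq_left h, abs_of_nonpos (by linarith)]; ring
  · rw [min_eq_right h, abs_of_nonneg (by linarith)]; ring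

lemma exp_abs_le_one (x y : ℝ) : Real.exp (-|x - y| / 2) ≤ 1 := by
  rw [← Real.exp_zero]
  have : (0:ℝ) ≤ |x - y| := abs_nonneg _
  exact Real.exp_le_exp.mpr (by linarith)

/-- every eigenvalue of the operator with kernel
`½ e^{−|ξ−η|/2} w'(ξ)w'(η)` lies in `[0, P/2]` where `P = ∫ (w')²`. -/
theorem camassaHolm_spectrum_bound
    (w' φ : ℝ → ℝ)
    (hw : MemLp w' 2 (volume : Measure ℝ))
    (hφ : MemLp φ 2 (volume : Measure ℝ))
    (hnorm : ∫ x : ℝ, φ x ^ 2 = 1)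
    (lam : ℝ)
    (heig : ∀ᵐ ξ : ℝ, ∫ η : ℝ, chKer w' ξ η * φ η = lam * φ ξ) :
    0 ≤ lam ∧ lam ≤ (∫ x : ℝ, w' x ^ 2) / 2 := by
  classical
  -- measurable representatives
  obtain ⟨w₀, hw₀m, hw₀e⟩ : ∃ g : ℝ → ℝ, Measurable g ∧ w' =ᵐ[volume] g :=
    ⟨hw.1.mk _, hw.1.measurable_mk, hw.1.ae_eq_mk⟩
  obtain ⟨φ₀, hφ₀m, hφ₀e⟩ : ∃ g : ℝ → ℝ, Measurable g ∧ φ =ᵐ[volume] g :=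
    ⟨hφ.1.mk _, hφ.1.measurable_mk, hφ.1.ae_eq_mk⟩
  have hw₀ : MemLp w₀ 2 (volume : Measure ℝ) := hw.ae_eq hw₀e
  have hφ₀ : MemLp φ₀ 2 (volume : Measure ℝ) := hφ.ae_eq hφ₀e
  set f : ℝ → ℝ := fun x => w₀ x * φ₀ x with hfdef
  have hfm : Measurable f := hw₀m.mul hφ₀m
  have hf : Integrable f (volume : Measure ℝ) := by
    have h1 : MemLp (w₀ • φ₀) 1 (volume : Measure ℝ) :=
      hφ₀.smul hw₀ (hpqr := ⟨by norm_num [ENNReal.inv_two_add_inv_two]⟩)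
    exact memLp_one_iff_integrable.mp h1
  set F : ℝ × ℝ → ℝ := fun p => (1/2) * Real.exp (-|p.1 - p.2| / 2) * (f p.1 * f p.2) with hFdef
  have hFm : Measurable F := by
    apply Measurable.mul
    · exact measurable_const.mul (((measurable_fst.sub measurable_snd).abs.neg).div_const 2).exp
    · exact (hfm.comp measurable_fst).mul (hfm.comp measurable_snd)
  have hdom : Integrable (fun p : ℝ × ℝ => (1/2) * (|f p.1| * |f p.2|))
      ((volume : Measure ℝ).prod volume) := (hf.abs.mul_prod hf.abs).const_mul _
  have hFle : ∀ p : ℝ × ℝ, ‖F p‖ ≤ (1/2) * (|f p.1| * |f p.2|) := by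
    intro p
    have h2 : (0:ℝ) ≤ |f p.1| * |f p.2| := mul_nonneg (abs_nonneg _) (abs_nonneg _)
    have h1 : Real.exp (-|p.1 - p.2| / 2) ≤ 1 := exp_abs_le_one _ _
    have h0 : (0:ℝ) < Real.exp (-|p.1 - p.2| / 2) := Real.exp_pos _
    have : ‖F p‖ = 1/2 * Real.exp (-|p.1 - p.2| / 2) * (|f p.1| * |f p.2|) := by
      rw [hFdef, Real.norm_eq_abs, abs_mul, abs_mul, abs_mul,
        abs_of_nonneg (by norm_num : (0:ℝ) ≤ 1/2), abs_of_pos h0]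
    rw [this]
    nlinarith
  have hF : Integrable F (((volume : Measure ℝ)).prod volume) := by
    refine hdom.mono hFm.aestronglyMeasurable (ae_of_all _ fun p => ?_)
    rw [Real.norm_eq_abs (1/2 * _), abs_of_nonneg (by positivity)]
    exact hFle p
  have key : lam = ∫ p : ℝ × ℝ, F p ∂(((volume : Measure ℝ)).prod volume) := by
    have step1 : lam = ∫ ξ : ℝ, (∫ η : ℝ, chKer w' ξ η * φ η) * φ ξ := by
      rw [show lam = lam * ∫ x, φ x ^ 2 by rw [hnorm, mul_one], ← integral_const_mul]
      refine (integral_congr_ae ?_).symm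
      filter_upwards [heig] with ξ h
      rw [h]; ring
    have step2 : (∫ ξ : ℝ, (∫ η : ℝ, chKer w' ξ η * φ η) * φ ξ)
        = ∫ ξ : ℝ, ∫ η : ℝ, F (ξ, η) := by
      refine integral_congr_ae ?_
      filter_upwards [hw₀e, hφ₀e] with ξ hwξ hφξ
      rw [← integral_mul_const]
      refine integral_congr_ae ?_
      filter_upwards [hw₀e, hφ₀e] with η hwη hφη
      simp only [hFdef, chKer, hfdef]
      rw [hwξ, hφξ, hwη, hφη]
      ring
    rw [step1, step2]
    exact integral_integral hF
  -- Cauchy–Schwarz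
  have hP : (0:ℝ) ≤ ∫ x : ℝ, w' x ^ 2 := integral_nonneg fun x => sq_nonneg _
  have habs2 : (∫ x : ℝ, |f x|) ^ 2 ≤ ∫ x : ℝ, w' x ^ 2 := by
    have hconj : Real.HolderConjugate 2 2 := Real.holderConjugate_iff.mpr ⟨by norm_num, by norm_num⟩
    have h2 : (ENNReal.ofReal (2:ℝ)) = 2 := by norm_num
    have hw2 : MemLp (fun x => |w₀ x|) (ENNReal.ofReal (2:ℝ)) (volume : Measure ℝ) := by
      rw [h2]; simpa [Real.norm_eq_abs] using hw₀.norm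
    have hφ2 : MemLp (fun x => |φ₀ x|) (ENNReal.ofReal (2:ℝ)) (volume : Measure ℝ) := by
      rw [h2]; simpa [Real.norm_eq_abs] using hφ₀.norm
    have hcs := integral_mul_le_Lp_mul_Lq_of_nonneg hconj
      (ae_of_all _ fun x => abs_nonneg (w₀ x)) (ae_of_all _ fun x => abs_nonneg (φ₀ x)) hw2 hφ2
    have hrw : ∀ g : ℝ → ℝ, ∀ x, |g x| ^ (2:ℝ) = g x ^ 2 := by
      intro g x
      rw [show (2:ℝ) = ((2:ℕ):ℝ) by norm_num, Real.rpow_natCast, sq_abs]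
    simp_rw [hrw] at hcs
    have hw'eq : ∫ x : ℝ, w₀ x ^ 2 = ∫ x : ℝ, w' x ^ 2 :=
      integral_congr_ae (by filter_upwards [hw₀e] with x h; rw [h])
    have hφeq : ∫ x : ℝ, φ₀ x ^ 2 = (1:ℝ) := by
      rw [← hnorm]
      exact integral_congr_ae (by filter_upwards [hφ₀e] with x h; rw [h])
    rw [hw'eq, hφeq, Real.one_rpow, mul_one] at hcs
    have hfeq : (∫ x : ℝ, |f x|) = ∫ x : ℝ, |w₀ x| * |φ₀ x| := by
      simp_rw [hfdef, abs_mul]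
    rw [hfeq]
    calc (∫ x : ℝ, |w₀ x| * |φ₀ x|) ^ 2
        ≤ ((∫ x : ℝ, w' x ^ 2) ^ ((1:ℝ)/2)) ^ 2 := by
          refine pow_le_pow_left₀ (integral_nonneg fun x => mul_nonneg (abs_nonneg _) (abs_nonneg _)) hcs 2
      _ = ∫ x : ℝ, w' x ^ 2 := by
          rw [← Real.rpow_natCast ((∫ x : ℝ, w' x ^ 2) ^ ((1:ℝ)/2)) 2, ← Real.rpow_mul hP]
          norm_num
  have hupper : lam ≤ (∫ x : ℝ, w' x ^ 2) / 2 := by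
    rw [key]
    have h1 : ∫ p : ℝ × ℝ, F p ∂(((volume : Measure ℝ)).prod volume)
        ≤ ∫ p : ℝ × ℝ, (1/2) * (|f p.1| * |f p.2|) ∂(((volume : Measure ℝ)).prod volume) :=
      integral_mono hF hdom fun p => (le_abs_self _).trans ((Real.norm_eq_abs _) ▸ hFle p)
    have h2 : ∫ p : ℝ × ℝ, (1/2) * (|f p.1| * |f p.2|) ∂(((volume : Measure ℝ)).prod volume)
        = (1/2) * ((∫ x : ℝ, |f x|) * (∫ x : ℝ, |f x|)) := by
      rw [integral_const_mul, integral_prod_mul (fun x : ℝ => |f x|) (fun x : ℝ => |f x|)]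
    have := habs2
    rw [sq] at this
    calc ∫ p : ℝ × ℝ, F p ∂(((volume : Measure ℝ)).prod volume)
        ≤ (1/2) * ((∫ x : ℝ, |f x|) * (∫ x : ℝ, |f x|)) := h1.trans_eq h2
      _ ≤ (∫ x : ℝ, w' x ^ 2) / 2 := by linarith
  -- positivity
  set H : (ℝ × ℝ) → ℝ → ℝ := fun p t => gfun t p.1 * gfun t p.2 * (f p.1 * f p.2) with hHdef
  have hHm : AEStronglyMeasurable (Function.uncurry H)
      ((((volume : Measure ℝ)).prod volume).prod volume) := by
    apply Measurable.aestronglyMeasurable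
    apply Measurable.mul
    · exact (gfun_measurable.comp (measurable_snd.prodMk
          (measurable_fst.comp measurable_fst))).mul
        (gfun_measurable.comp (measurable_snd.prodMk
          (measurable_snd.comp measurable_fst)))
    · exact (hfm.comp (measurable_fst.comp measurable_fst)).mul
        (hfm.comp (measurable_snd.comp measurable_fst))
  have hHint : Integrable (Function.uncurry H)
      ((((volume : Measure ℝ)).prod volume).prod volume) := by
    rw [integrable_prod_iff hHm]
    constructor
    · exact ae_of_all _ fun p => (gfun_integrable p.1 p.2).mul_const (f p.1 * f p.2)
    · have heq : (fun p : ℝ × ℝ => ∫ t : ℝ, ‖Function.uncurry H (p, t)‖)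
          = fun p : ℝ × ℝ => Real.exp (-|p.1 - p.2| / 2) * |f p.1 * f p.2| := by
        funext p
        have hn : ∀ t : ℝ, ‖Function.uncurry H (p, t)‖
            = gfun t p.1 * gfun t p.2 * |f p.1 * f p.2| := by
          intro t
          simp only [Function.uncurry, hHdef]
          rw [Real.norm_eq_abs, abs_mul,
            abs_of_nonneg (mul_nonneg (gfun_nonneg _ _) (gfun_nonneg _ _))]
        simp_rw [hn]
        rw [integral_mul_const, gfun_integral]
      rw [heq]
      refine (hf.abs.mul_prod hf.abs).mono ?_ (ae_of_all _ fun p => ?_)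
      · exact (((((measurable_fst.sub measurable_snd).abs.neg).div_const 2).exp).mul
          (((hfm.comp measurable_fst).mul (hfm.comp measurable_snd)).abs)).aestronglyMeasurable
      · have h1 : Real.exp (-|p.1 - p.2| / 2) ≤ 1 := exp_abs_le_one _ _
        have h0 : (0:ℝ) < Real.exp (-|p.1 - p.2| / 2) := Real.exp_pos _
        have h2 : (0:ℝ) ≤ |f p.1| * |f p.2| := mul_nonneg (abs_nonneg _) (abs_nonneg _)
        rw [Real.norm_eq_abs, Real.norm_eq_abs, abs_of_nonneg (by positivity),
          abs_of_nonneg h2, abs_mul]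
        nlinarith
  have hswap := integral_integral_swap hHint
  have hL : (∫ p : ℝ × ℝ, ∫ t : ℝ, H p t ∂volume ∂(((volume : Measure ℝ)).prod volume))
      = ∫ p : ℝ × ℝ, Real.exp (-|p.1 - p.2| / 2) * (f p.1 * f p.2)
        ∂(((volume : Measure ℝ)).prod volume) := by
    refine integral_congr_ae (ae_of_all _ fun p => ?_)
    simp only [hHdef]
    rw [integral_mul_const, gfun_integral]
  have hR : ∀ t : ℝ, (∫ p : ℝ × ℝ, H p t ∂(((volume : Measure ℝ)).prod volume))
      = (∫ x : ℝ, gfun t x * f x) * (∫ x : ℝ, gfun t x * f x) := by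
    intro t
    have hpt : ∀ p : ℝ × ℝ, H p t = (gfun t p.1 * f p.1) * (gfun t p.2 * f p.2) := by
      intro p; simp only [hHdef]; ring
    simp_rw [hpt]
    exact integral_prod_mul (fun x : ℝ => gfun t x * f x) (fun x : ℝ => gfun t x * f x)
  have hlam0 : 0 ≤ lam := by
    have hkey2 : lam = (1/2) * ∫ p : ℝ × ℝ, Real.exp (-|p.1 - p.2| / 2) * (f p.1 * f p.2)
        ∂(((volume : Measure ℝ)).prod volume) := by
      rw [key, ← integral_const_mul]
      refine integral_congr_ae (ae_of_all _ fun p => ?_)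
      simp only [hFdef]; ring
    rw [hkey2, ← hL, hswap]
    have : 0 ≤ ∫ t : ℝ, ∫ p : ℝ × ℝ, H p t ∂(((volume : Measure ℝ)).prod volume) ∂volume := by
      refine integral_nonneg fun t => ?_
      rw [hR t]; exact mul_self_nonneg _
    linarith
  exact ⟨hlam0, hupper⟩
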